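/- Let C ⊆ 2^{[n]} be an intersection complete code and let U = (U_1,…,U_n) be an open convex realization of C in ℝ^d. Then there exists ε > 0 such that the sets V_i := trim(U_i, ε) form a non-degenerate open convex realization of C in ℝ^d. -/

import Mathlib

/-- The combinatorial code of a collection of sets `U` in `X`: the set of
all `σ ⊆ [n]` such that some point `x ∈ X` lies in exactly the `U i` with `i ∈ σ`. -/
def codeOf {n : ℕ} {X : Type*} (U : Fin n → Set X) : Set (Finset (Fin n)) :=
  {σ | ∃ x : X, ∀ i, i ∈ σ ↔ x ∈ U i}

/-- The trim of `U` by `ε`: points of `U` whose closed `ε`-ball is contained in `U`. -/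
def trim {d : ℕ} (U : Set (EuclideanSpace ℝ (Fin d))) (ε : ℝ) :
    Set (EuclideanSpace ℝ (Fin d)) :=
  {p ∈ U | Metric.closedBall p ε ⊆ U}

/-- The atom of `σ` in the arrangement `V`. -/
def atom {n d : ℕ} (V : Fin n → Set (EuclideanSpace ℝ (Fin d))) (σ : Finset (Fin n)) :
    Set (EuclideanSpace ℝ (Fin d)) :=
  {x | ∀ i, i ∈ σ ↔ x ∈ V i}

/-- Non-degeneracy: every atom of a codeword is top dimensional (its intersection with any
open set is empty or has nonempty interior), and for each nonempty `σ` the intersection of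
the boundaries `∂(V i)`, `i ∈ σ`, is contained in the boundary of `⋂ i ∈ σ, V i`. -/
def NonDegenerate {n d : ℕ} (V : Fin n → Set (EuclideanSpace ℝ (Fin d))) : Prop :=
  (∀ σ ∈ codeOf V, ∀ O : Set (EuclideanSpace ℝ (Fin d)), IsOpen O →
      atom V σ ∩ O = ∅ ∨ (interior (atom V σ ∩ O)).Nonempty) ∧
  (∀ σ : Finset (Fin n), σ.Nonempty →
      (⋂ i ∈ σ, frontier (V i)) ⊆ frontier (⋂ i ∈ σ, V i))

namespace TrimAux

variable {n d : ℕ}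

local notation "E" => EuclideanSpace ℝ (Fin d)

lemma mem_trim {U : Set E} {ε : ℝ} (hε : 0 ≤ ε) {p : E} :
    p ∈ trim U ε ↔ Metric.closedBall p ε ⊆ U := by
  constructor
  · rintro ⟨_, h⟩; exact h
  · intro h; exact ⟨h (Metric.mem_closedBall_self hε), h⟩

lemma trim_subset {U : Set E} {ε : ℝ} : trim U ε ⊆ U := fun p hp => hp.1

lemma convex_trim {U : Set E} (hU : Convex ℝ U) (ε : ℝ) : Convex ℝ (trim U ε) := by
  rintro p ⟨hpU, hp⟩ q ⟨hqU, hq⟩ a b ha hb hab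
  refine ⟨hU hpU hqU ha hb hab, ?_⟩
  intro z hz
  have hz' : ‖z - (a • p + b • q)‖ ≤ ε := by
    rw [Metric.mem_closedBall, dist_eq_norm] at hz; exact hz
  have h1 : p + (z - (a • p + b • q)) ∈ Metric.closedBall p ε := by
    rw [Metric.mem_closedBall, dist_eq_norm]; simpa using hz'
  have h2 : q + (z - (a • p + b • q)) ∈ Metric.closedBall q ε := by
    rw [Metric.mem_closedBall, dist_eq_norm]; simpa using hz'
  have hmem := hU (hp h1) (hq h2) ha hb hab
  have hb' : b = 1 - a := by linarith
  subst hb'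
  have heq : a • (p + (z - (a • p + (1-a) • q))) + (1-a) • (q + (z - (a • p + (1-a) • q))) = z := by
    module
  rwa [heq] at hmem

lemma isOpen_trim {U : Set E} (hU : IsOpen U) (ε : ℝ) : IsOpen (trim U ε) := by
  rcases lt_or_ge ε 0 with hε | hε
  · have : trim U ε = U := by
      ext p; simp [trim, Metric.closedBall_eq_empty.mpr hε]
    rw [this]; exact hU
  rw [Metric.isOpen_iff]
  intro p hp
  obtain ⟨δ, hδ, hth⟩ :=
    (isCompact_closedBall p ε).exists_thickening_subset_open hU ((mem_trim hε).mp hp)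
  refine ⟨δ, hδ, ?_⟩
  intro q hq
  rw [mem_trim hε]
  intro z hz
  apply hth
  rw [Metric.mem_thickening_iff]
  refine ⟨z - q + p, ?_, ?_⟩
  · rw [Metric.mem_closedBall, dist_eq_norm]
    simpa [add_sub_cancel_right] using
      (by rw [Metric.mem_closedBall, dist_eq_norm] at hz; exact hz : ‖z - q‖ ≤ ε)
  · rw [dist_eq_norm]
    have : z - (z - q + p) = q - p := by abel
    rw [this, ← dist_eq_norm]
    exact hq

lemma interp {U : Set E} (hU : Convex ℝ U) {p q : E} {r₁ r₂ a b : ℝ}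
    (ha : 0 ≤ a) (hb : 0 ≤ b) (hab : a + b = 1) (hr₁ : 0 ≤ r₁) (hr₂ : 0 ≤ r₂)
    (h1 : Metric.closedBall p r₁ ⊆ U) (h2 : Metric.closedBall q r₂ ⊆ U) :
    Metric.closedBall (a • p + b • q) (a * r₁ + b * r₂) ⊆ U := by
  intro z hz
  set x := a • p + b • q with hx
  set R := a * r₁ + b * r₂ with hR
  have hRnn : 0 ≤ R := by positivity
  have hzn : ‖z - x‖ ≤ R := by rw [Metric.mem_closedBall, dist_eq_norm] at hz; exact hz
  rcases eq_or_lt_of_le hRnn with hR0 | hRpos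
  · have hz0 : z = x := by
      have h0 : ‖z - x‖ ≤ 0 := by rw [← hR0] at hzn; exact hzn
      have := le_antisymm h0 (norm_nonneg _)
      rw [norm_eq_zero, sub_eq_zero] at this; exact this
    rw [hz0, hx]
    exact hU (h1 (Metric.mem_closedBall_self hr₁)) (h2 (Metric.mem_closedBall_self hr₂)) ha hb hab
  · set v := z - x with hv
    have h1' : p + (r₁ / R) • v ∈ Metric.closedBall p r₁ := by
      rw [Metric.mem_closedBall, dist_eq_norm, add_sub_cancel_left, norm_smul]
      rw [Real.norm_eq_abs, abs_of_nonneg (by positivity)]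
      rw [div_mul_eq_mul_div, div_le_iff₀ hRpos]
      nlinarith [norm_nonneg v]
    have h2' : q + (r₂ / R) • v ∈ Metric.closedBall q r₂ := by
      rw [Metric.mem_closedBall, dist_eq_norm, add_sub_cancel_left, norm_smul]
      rw [Real.norm_eq_abs, abs_of_nonneg (by positivity)]
      rw [div_mul_eq_mul_div, div_le_iff₀ hRpos]
      nlinarith [norm_nonneg v]
    have hmem := hU (h1 h1') (h2 h2') ha hb hab
    have heq : a • (p + (r₁ / R) • v) + b • (q + (r₂ / R) • v) = z := by
      have hcoef : a * (r₁ / R) + b * (r₂ / R) = 1 := by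
        field_simp
        exact hR.symm
      have hexp : a • (p + (r₁ / R) • v) + b • (q + (r₂ / R) • v)
          = (a • p + b • q) + (a * (r₁ / R) + b * (r₂ / R)) • v := by module
      rw [hexp, hcoef, one_smul, hv, ← hx]
      abel
    rwa [heq] at hmem

lemma closure_trim {U : Set E} {ε : ℝ} {x : E} (hx : x ∈ closure (trim U ε)) :
    Metric.ball x ε ⊆ U := by
  intro z hz
  rw [Metric.mem_ball, dist_comm] at hz
  have hδ : 0 < ε - dist x z := by linarith
  obtain ⟨p, hp, hpd⟩ := Metric.mem_closure_iff.mp hx _ hδ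
  apply hp.2
  rw [Metric.mem_closedBall, dist_comm]
  calc dist p z ≤ dist p x + dist x z := dist_triangle _ _ _
    _ ≤ ε := by rw [dist_comm] at hpd; linarith

lemma inter_mem {C : Set (Finset (Fin n))} (hIC : ∀ c₁ ∈ C, ∀ c₂ ∈ C, c₁ ∩ c₂ ∈ C)
    (S : Finset (Finset (Fin n))) (hne : S.Nonempty) (hS : ∀ t ∈ S, t ∈ C) :
    ∃ c ∈ C, ∀ i, i ∈ c ↔ ∀ t ∈ S, i ∈ t := by
  revert hS
  induction hne using Finset.Nonempty.cons_induction with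
  | singleton a =>
    intro hS
    exact ⟨a, hS a (by simp), by simp⟩
  | cons a s ha hs ih =>
    intro hS
    obtain ⟨c, hc, hci⟩ := ih (fun t ht => hS t (Finset.mem_cons_of_mem ht))
    refine ⟨a ∩ c, hIC a (hS a (Finset.mem_cons_self a s)) c hc, fun i => ?_⟩
    rw [Finset.forall_mem_cons, Finset.mem_inter, hci]

lemma code_ball {C : Set (Finset (Fin n))} (hIC : ∀ c₁ ∈ C, ∀ c₂ ∈ C, c₁ ∩ c₂ ∈ C)
    {U : Fin n → Set E} (hcode : codeOf U = C) {z : E} {ρ : ℝ} (hρ : 0 ≤ ρ) :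
    ∃ c ∈ C, ∀ i, i ∈ c ↔ Metric.closedBall z ρ ⊆ U i := by
  classical
  set B := Metric.closedBall z ρ with hB
  have hfin : {t : Finset (Fin n) | ∃ p ∈ B, ∀ i, i ∈ t ↔ p ∈ U i}.Finite := Set.toFinite _
  set S := hfin.toFinset with hSdef
  have hne : S.Nonempty := by
    refine ⟨Finset.univ.filter (fun i => z ∈ U i), ?_⟩
    rw [hSdef, Set.Finite.mem_toFinset]
    exact ⟨z, Metric.mem_closedBall_self hρ, by simp⟩
  have hS : ∀ t ∈ S, t ∈ C := by
    intro t ht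
    rw [hSdef, Set.Finite.mem_toFinset] at ht
    obtain ⟨p, _, hp⟩ := ht
    rw [← hcode]; exact ⟨p, hp⟩
  obtain ⟨c, hc, hci⟩ := inter_mem hIC S hne hS
  refine ⟨c, hc, fun i => ?_⟩
  rw [hci]
  constructor
  · intro h p hp
    have hmem : (Finset.univ.filter (fun j => p ∈ U j)) ∈ S := by
      rw [hSdef, Set.Finite.mem_toFinset]; exact ⟨p, hp, by simp⟩
    have := h _ hmem
    simpa using this
  · intro h t ht
    rw [hSdef, Set.Finite.mem_toFinset] at ht
    obtain ⟨p, hpB, hp⟩ := ht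
    exact (hp i).mpr (h hpB)

lemma tau_lemma {C : Set (Finset (Fin n))} (hIC : ∀ c₁ ∈ C, ∀ c₂ ∈ C, c₁ ∩ c₂ ∈ C)
    {U : Fin n → Set E} (hcode : codeOf U = C) {ε : ℝ} (hε : 0 < ε) (x : E) :
    ∃ c ∈ C, ∀ i, i ∈ c ↔ Metric.ball x ε ⊆ U i := by
  classical
  have hch : ∀ i : Fin n, ¬ Metric.ball x ε ⊆ U i →
      ∃ q, q ∈ Metric.ball x ε ∧ q ∉ U i := by
    intro i h
    obtain ⟨q, hq1, hq2⟩ := Set.not_subset.mp h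
    exact ⟨q, hq1, hq2⟩
  choose! q hq1 hq2 using hch
  set D : Finset ℝ := insert (ε/2)
    ((Finset.univ.filter (fun i => ¬ Metric.ball x ε ⊆ U i)).image (fun i => dist (q i) x))
    with hD
  have hDne : D.Nonempty := ⟨ε/2, Finset.mem_insert_self _ _⟩
  set ρ := D.max' hDne with hρdef
  have hρ2 : ε/2 ≤ ρ := Finset.le_max' _ _ (Finset.mem_insert_self _ _)
  have hρpos : 0 ≤ ρ := by linarith
  have hρlt : ρ < ε := by
    rw [hρdef, Finset.max'_lt_iff]
    intro y hy
    rw [hD, Finset.mem_insert] at hy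
    rcases hy with hy | hy
    · rw [hy]; linarith
    · rw [Finset.mem_image] at hy
      obtain ⟨i, hi, rfl⟩ := hy
      rw [Finset.mem_filter] at hi
      have := hq1 i hi.2
      rwa [Metric.mem_ball] at this
  obtain ⟨c, hc, hci⟩ := code_ball hIC hcode (z := x) hρpos
  refine ⟨c, hc, fun i => ?_⟩
  rw [hci]
  by_cases hi : Metric.ball x ε ⊆ U i
  · simp only [hi, iff_true]
    exact (Metric.closedBall_subset_ball hρlt).trans hi
  · simp only [hi, iff_false]
    intro hsub
    apply hq2 i hi
    apply hsub
    rw [Metric.mem_closedBall]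
    apply Finset.le_max'
    rw [hD, Finset.mem_insert, Finset.mem_image]
    right
    exact ⟨i, by rw [Finset.mem_filter]; exact ⟨Finset.mem_univ _, hi⟩, rfl⟩

lemma avoid {Uj : Set E} (hconv : Convex ℝ Uj) {ε : ℝ} (hε : 0 < ε) {x w y : E} {t : ℝ}
    (ht0 : 0 < t) (ht1 : t < 1) (hy : y = x + t • (x - w))
    (hx : ¬ Metric.closedBall x ε ⊆ Uj) (hw : Metric.closedBall w (2*ε) ⊆ Uj) :
    y ∉ closure (trim Uj ε) := by
  intro hycl
  have hball : Metric.ball y ε ⊆ Uj := closure_trim hycl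
  have h1t : 0 < 1 + t := by linarith
  have hb0 : 0 < t / (1+t) := div_pos ht0 h1t
  have hbhalf : t / (1+t) < 1/2 := by rw [div_lt_iff₀ h1t]; linarith
  have hab : 1 / (1+t) + t / (1+t) = 1 := by field_simp
  set b := t / (1+t) with hbdef
  set a := 1 / (1+t) with hadef
  have ha0 : 0 < a := by positivity
  set r := ε * (1 - 2*b) / (1 - b) with hrdef
  have hb1 : b < 1 := by linarith
  have hr0 : 0 ≤ r := by
    apply div_nonneg (mul_nonneg hε.le (by linarith)) (by linarith)
  have hrε : r < ε := by
    rw [hrdef, div_lt_iff₀ (by linarith : (0:ℝ) < 1 - b)]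
    nlinarith
  have h1 : Metric.closedBall y r ⊆ Uj := (Metric.closedBall_subset_ball hrε).trans hball
  have hmain := interp hconv ha0.le hb0.le hab hr0 (by linarith : (0:ℝ) ≤ 2*ε) h1 hw
  have hxeq : a • y + b • w = x := by
    rw [hy, hadef, hbdef]
    match_scalars <;> field_simp <;> ring
  have hrad : a * r + b * (2*ε) = ε := by
    rw [hrdef, hadef]
    have hbne : (1:ℝ) - b ≠ 0 := by linarith
    have haeq : (1:ℝ) / (1+t) = 1 - b := by rw [hbdef]; field_simp; ring
    rw [haeq]
    field_simp
    ring
  rw [hxeq, hrad] at hmain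
  exact hx hmain

lemma reach {U : Fin n → Set E} (hconv : ∀ i, Convex ℝ (U i)) {ε : ℝ} (hε : 0 < ε)
    (w : E) (x : E) (σ : Finset (Fin n))
    (hw : ∀ i ∈ σ, Metric.closedBall w (2*ε) ⊆ U i)
    (hσ : ∀ i ∈ σ, Metric.ball x ε ⊆ U i) :
    x ∈ closure (⋂ i ∈ σ, trim (U i) ε) := by
  rw [Metric.mem_closure_iff]
  intro δ hδ
  have hD : (0:ℝ) ≤ dist x w := dist_nonneg
  set s := min (1/2 : ℝ) (δ / (2 * (dist x w + 1))) with hs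
  have hs0 : 0 < s := lt_min (by norm_num) (by positivity)
  have hs2 : s ≤ 1/2 := min_le_left _ _
  have hs1 : s < 1 := by linarith
  refine ⟨(1-s) • x + s • w, ?_, ?_⟩
  · rw [Set.mem_iInter₂]
    intro i hi
    rw [mem_trim hε.le]
    set r₁ := ε * (1 - 2*s) / (1 - s) with hr₁
    have hr₁0 : 0 ≤ r₁ := div_nonneg (mul_nonneg hε.le (by linarith)) (by linarith)
    have hr₁ε : r₁ < ε := by
      rw [hr₁, div_lt_iff₀ (by linarith : (0:ℝ) < 1 - s)]
      nlinarith
    have h1 : Metric.closedBall x r₁ ⊆ U i :=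
      (Metric.closedBall_subset_ball hr₁ε).trans (hσ i hi)
    have hmain := interp (hconv i) (by linarith : (0:ℝ) ≤ 1 - s) hs0.le
      (by ring) hr₁0 (by linarith : (0:ℝ) ≤ 2*ε) h1 (hw i hi)
    have hrad : (1-s) * r₁ + s * (2*ε) = ε := by
      have hsne : (1:ℝ) - s ≠ 0 := by linarith
      rw [hr₁]
      field_simp
      ring
    rwa [hrad] at hmain
  · have hd : dist x ((1-s) • x + s • w) = s * dist x w := by
      rw [dist_eq_norm]
      have h1 : x - ((1-s) • x + s • w) = s • (x - w) := by module
      rw [h1, norm_smul, Real.norm_eq_abs, abs_of_pos hs0, ← dist_eq_norm]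
    rw [hd]
    have hsle : s ≤ δ / (2 * (dist x w + 1)) := min_le_right _ _
    have hle : s * dist x w ≤ (δ / (2 * (dist x w + 1))) * dist x w :=
      mul_le_mul_of_nonneg_right hsle hD
    have hlt : (δ / (2 * (dist x w + 1))) * dist x w < δ := by
      rw [div_mul_eq_mul_div, div_lt_iff₀ (by positivity)]
      nlinarith
    linarith

end TrimAux

open TrimAux in
/-- Trimming an open convex realization of an intersection complete code by a small enough
`ε` yields a non-degenerate open convex realization of the same code. -/
theorem trim_realization_nondegenerate {n d : ℕ} (C : Set (Finset (Fin n)))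
    (hempty : ∅ ∈ C) (hIC : ∀ c₁ ∈ C, ∀ c₂ ∈ C, c₁ ∩ c₂ ∈ C)
    (U : Fin n → Set (EuclideanSpace ℝ (Fin d)))
    (hconv : ∀ i, Convex ℝ (U i)) (hopen : ∀ i, IsOpen (U i)) (hcode : codeOf U = C) :
    ∃ ε > (0 : ℝ),
      (∀ i, Convex ℝ (trim (U i) ε)) ∧ (∀ i, IsOpen (trim (U i) ε)) ∧
      codeOf (fun i => trim (U i) ε) = C ∧
      NonDegenerate (fun i => trim (U i) ε) := by
  classical
  -- choose witnesses with positive depth for every codeword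
  have hwit : ∀ c : Finset (Fin n), c ∈ C → ∃ (z : EuclideanSpace ℝ (Fin d)) (r : ℝ),
      0 < r ∧ (∀ i ∈ c, Metric.closedBall z r ⊆ U i) ∧ (∀ i, i ∈ c ↔ z ∈ U i) := by
    intro c hc
    rw [← hcode] at hc
    obtain ⟨z, hz⟩ := hc
    have hzin : z ∈ ⋂ i ∈ c, U i := Set.mem_iInter₂.mpr fun i hi => (hz i).mp hi
    have hopen' : IsOpen (⋂ i ∈ c, U i) := isOpen_biInter_finset fun i _ => hopen i
    obtain ⟨δ, hδ, hball⟩ := Metric.isOpen_iff.mp hopen' z hzin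
    refine ⟨z, δ/2, by linarith, fun i hi p hp => ?_, hz⟩
    have hpz : p ∈ Metric.ball z δ := by
      rw [Metric.mem_ball]
      rw [Metric.mem_closedBall] at hp
      linarith
    exact Set.mem_iInter₂.mp (hball hpz) i hi
  choose! zw rw' hrpos hballw hcw using hwit
  set F := (Set.toFinite C).toFinset with hF
  have hFne : F.Nonempty := ⟨∅, by rw [hF, Set.Finite.mem_toFinset]; exact hempty⟩
  set ε := (F.inf' hFne rw') / 2 with hε0
  have hεpos : 0 < ε := by
    rw [hε0]
    apply half_pos
    rw [Finset.lt_inf'_iff]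
    intro c hc
    exact hrpos c (by rwa [hF, Set.Finite.mem_toFinset] at hc)
  have hdepth : ∀ c ∈ C, ∀ i ∈ c, Metric.closedBall (zw c) (2*ε) ⊆ U i := by
    intro c hc i hi
    refine (Metric.closedBall_subset_closedBall ?_).trans (hballw c hc i hi)
    have h1 : F.inf' hFne rw' ≤ rw' c :=
      Finset.inf'_le _ (by rw [hF, Set.Finite.mem_toFinset]; exact hc)
    rw [hε0]; linarith
  set V : Fin n → Set (EuclideanSpace ℝ (Fin d)) := fun i => trim (U i) ε with hV
  have hVopen : ∀ i, IsOpen (V i) := fun i => isOpen_trim (hopen i) ε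
  -- code equality
  have hcodeV : codeOf V = C := by
    apply Set.eq_of_subset_of_subset
    · rintro s ⟨x, hx⟩
      obtain ⟨c, hc, hci⟩ := code_ball hIC hcode (z := x) hεpos.le
      have hs : s = c := Finset.ext fun i => by
        rw [hx i, hci i, hV]
        exact mem_trim hεpos.le
      rw [hs]; exact hc
    · intro c hc
      refine ⟨zw c, fun i => ⟨fun hi => ?_, fun hi => ?_⟩⟩
      · rw [hV, mem_trim hεpos.le]
        exact (Metric.closedBall_subset_closedBall (by linarith)).trans (hdepth c hc i hi)
      · exact (hcw c hc i).mpr (trim_subset hi)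
  refine ⟨ε, hεpos, fun i => convex_trim (hconv i) ε, fun i => isOpen_trim (hopen i) ε,
    hcodeV, ?_, ?_⟩
  · -- top dimensional atoms
    intro σ hσcode O hO
    rcases Set.eq_empty_or_nonempty (atom V σ ∩ O) with he | ⟨x, hxa, hxO⟩
    · left; exact he
    right
    obtain ⟨τ, hτC, hτi⟩ := tau_lemma hIC hcode hεpos x
    have hστ : ∀ i ∈ σ, i ∈ τ := fun i hi => (hτi i).mpr
      (Metric.ball_subset_closedBall.trans ((mem_trim hεpos.le).mp ((hxa i).mp hi)))
    set w := zw τ with hwdef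
    have hwd : ∀ i ∈ τ, Metric.closedBall w (2*ε) ⊆ U i := hdepth τ hτC
    set Ω' := O ∩ ((⋂ i ∈ σ, V i) ∩
      (⋂ j ∈ Finset.univ.filter (fun j => j ∉ τ), (closure (V j))ᶜ)) with hΩ'
    have hΩ'open : IsOpen Ω' := hO.inter
      ((isOpen_biInter_finset fun i _ => hVopen i).inter
        (isOpen_biInter_finset fun j _ => isClosed_closure.isOpen_compl))
    have hxΩ' : x ∈ Ω' := by
      refine ⟨hxO, Set.mem_iInter₂.mpr fun i hi => (hxa i).mp hi,
        Set.mem_iInter₂.mpr fun j hj => ?_⟩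
      intro hcl
      have hb : Metric.ball x ε ⊆ U j := closure_trim hcl
      exact (Finset.mem_filter.mp hj).2 ((hτi j).mpr hb)
    obtain ⟨δ, hδ, hballΩ⟩ := Metric.isOpen_iff.mp hΩ'open x hxΩ'
    have hD : (0:ℝ) ≤ dist x w := dist_nonneg
    set t := min (1/2 : ℝ) (δ / (2 * (dist x w + 1))) with ht
    have ht0 : 0 < t := lt_min (by norm_num) (by positivity)
    have ht1 : t < 1 := lt_of_le_of_lt (min_le_left _ _) (by norm_num)
    set y := x + t • (x - w) with hy
    have hdyx : dist y x = t * dist x w := by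
      rw [dist_eq_norm]
      have h1 : y - x = t • (x - w) := by rw [hy]; abel
      rw [h1, norm_smul, Real.norm_eq_abs, abs_of_pos ht0, ← dist_eq_norm]
    have hyB : y ∈ Metric.ball x δ := by
      rw [Metric.mem_ball, hdyx]
      have hsle : t ≤ δ / (2 * (dist x w + 1)) := min_le_right _ _
      have hle : t * dist x w ≤ (δ / (2 * (dist x w + 1))) * dist x w :=
        mul_le_mul_of_nonneg_right hsle hD
      have hlt : (δ / (2 * (dist x w + 1))) * dist x w < δ := by
        rw [div_mul_eq_mul_div, div_lt_iff₀ (by positivity)]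
        nlinarith
      linarith
    have hyΩ' : y ∈ Ω' := hballΩ hyB
    have havoid : ∀ j, j ∉ σ → j ∈ τ → y ∉ closure (V j) := by
      intro j hjσ hjτ
      refine avoid (hconv j) hεpos ht0 ht1 hy ?_ (hwd j hjτ)
      intro hsub
      exact hjσ ((hxa j).mpr ((mem_trim hεpos.le).mpr hsub))
    set Ω := Ω' ∩ (⋂ j ∈ Finset.univ.filter (fun j => j ∉ σ ∧ j ∈ τ), (closure (V j))ᶜ)
      with hΩ
    have hΩopen : IsOpen Ω := hΩ'open.inter
      (isOpen_biInter_finset fun j _ => isClosed_closure.isOpen_compl)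
    have hyΩ : y ∈ Ω := by
      refine ⟨hyΩ', Set.mem_iInter₂.mpr fun j hj => ?_⟩
      have hj' := (Finset.mem_filter.mp hj).2
      exact havoid j hj'.1 hj'.2
    have hΩsub : Ω ⊆ atom V σ ∩ O := by
      rintro p ⟨⟨hpO, hpV, hpNτ⟩, hpTS⟩
      refine ⟨fun i => ⟨fun hi => Set.mem_iInter₂.mp hpV i hi, fun hpi => ?_⟩, hpO⟩
      by_contra hiσ
      by_cases hiτ : i ∈ τ
      · exact (Set.mem_iInter₂.mp hpTS i (by simp [hiσ, hiτ])) (subset_closure hpi)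
      · exact (Set.mem_iInter₂.mp hpNτ i (by simp [hiτ])) (subset_closure hpi)
    exact ⟨y, interior_maximal hΩsub hΩopen hyΩ⟩
  · -- boundary condition
    intro σ hσne x hx
    have hfr : ∀ i ∈ σ, x ∈ closure (V i) ∧ x ∉ V i := by
      intro i hi
      have hxi := Set.mem_iInter₂.mp hx i hi
      rw [(hVopen i).frontier_eq] at hxi
      exact ⟨hxi.1, hxi.2⟩
    have hballx : ∀ i ∈ σ, Metric.ball x ε ⊆ U i := fun i hi =>
      closure_trim (hfr i hi).1
    obtain ⟨τ, hτC, hτi⟩ := tau_lemma hIC hcode hεpos x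
    have hστ : ∀ i ∈ σ, i ∈ τ := fun i hi => (hτi i).mpr (hballx i hi)
    have hwd : ∀ i ∈ σ, Metric.closedBall (zw τ) (2*ε) ⊆ U i := fun i hi =>
      hdepth τ hτC i (hστ i hi)
    have hxcl : x ∈ closure (⋂ i ∈ σ, V i) :=
      reach hconv hεpos (zw τ) x σ hwd hballx
    obtain ⟨i₀, hi₀⟩ := hσne
    have hopen' : IsOpen (⋂ i ∈ σ, V i) := isOpen_biInter_finset fun i _ => hVopen i
    rw [hopen'.frontier_eq]
    exact ⟨hxcl, fun hmem => (hfr i₀ hi₀).2 (Set.mem_iInter₂.mp hmem i₀ hi₀)⟩
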